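/- Let n and s be integers with n ≤ s < n²/4, and let q, r be the unique integers with 1 ≤ r < q ≤ n and C(n,2) − s − 1 = C(q,2) − r. Then, as real numbers, r·n!/q! > (n/2)^(s/n − 1), where the right-hand side is the real power of n/2 with real exponent s/n − 1. -/
import Mathlib

lemma two_mul_choose_two (m : ℕ) : 2 * m.choose 2 = m * (m - 1) := by
  cases m with
  | zero => rfl
  | succ k =>
    rw [Nat.choose_two_right, Nat.mul_div_cancel']
    simpa [Nat.mul_comm] using (Nat.even_mul_succ_self k).two_dvd

/-- For `n ≤ s < n²/4` and `q`, `r` the unique integers with `1 ≤ r < q ≤ n` and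
`C(n,2) − s − 1 = C(q,2) − r`, the minimal product satisfies
`r·n!/q! > (n/2)^(s/n − 1)` as real numbers. -/
theorem stmt_18 (n s q r : ℕ) (hns : n ≤ s) (hs : 4 * s < n ^ 2)
    (hr : 1 ≤ r) (hrq : r < q) (hq : q ≤ n)
    (heq : (n.choose 2 : ℤ) - s - 1 = (q.choose 2 : ℤ) - r) :
    ((n : ℝ) / 2) ^ ((s : ℝ) / (n : ℝ) - 1) <
      (r : ℝ) * (n.factorial : ℝ) / (q.factorial : ℝ) := by
  have hn5 : 5 ≤ n := by nlinarith
  have hqn : q < n := by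
    rcases lt_or_eq_of_le hq with h | h
    · exact h
    · subst h
      have h1 : (r : ℤ) = (s : ℤ) + 1 := by linarith
      have h2 : r = s + 1 := by exact_mod_cast h1
      omega
  have hcnz : 2 * (n.choose 2 : ℤ) = (n : ℤ) * ((n : ℤ) - 1) := by
    have h := two_mul_choose_two n
    zify [show 1 ≤ n by omega] at h
    linarith
  have hcqz : 2 * (q.choose 2 : ℤ) = (q : ℤ) * ((q : ℤ) - 1) := by
    have h := two_mul_choose_two q
    zify [show 1 ≤ q by omega] at h
    linarith
  have key : 2 * (s : ℤ) = (n : ℤ) * ((n : ℤ) - 1) - (q : ℤ) * ((q : ℤ) - 1)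
      + 2 * (r : ℤ) - 2 := by linarith
  have hsz : (4 : ℤ) * s < (n : ℤ) ^ 2 := by exact_mod_cast hs
  have hrz : (1 : ℤ) ≤ r := by exact_mod_cast hr
  have hrqz : (r : ℤ) < q := by exact_mod_cast hrq
  have hqz : (q : ℤ) ≤ n := by exact_mod_cast hq
  have hn5z : (5 : ℤ) ≤ n := by exact_mod_cast hn5
  -- 2q > n
  have hq2 : (n : ℤ) < 2 * q := by
    by_contra h
    push_neg at h
    nlinarith [mul_nonneg (sub_nonneg.2 h) (sub_nonneg.2 h),
      mul_nonneg (sub_nonneg.2 h) (show (0:ℤ) ≤ q by linarith)]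
  -- s < n * (n - q + 1)
  have hs2 : (s : ℤ) < (n : ℤ) * ((n : ℤ) - (q : ℤ) + 1) := by
    nlinarith [sq_nonneg ((n : ℤ) - (q : ℤ))]
  set m := n - q with hm
  have hm1 : 1 ≤ m := by omega
  have hsnat : s < n * (m + 1) := by
    have hmz : (n : ℤ) - (q : ℤ) + 1 = (m : ℤ) + 1 := by omega
    rw [hmz] at hs2
    exact_mod_cast hs2
  have hn0R : (0 : ℝ) < (n : ℝ) := by positivity
  have hn2 : (1 : ℝ) < (n : ℝ) / 2 := by
    have : (5 : ℝ) ≤ (n : ℝ) := by exact_mod_cast hn5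
    linarith
  have hexp : (s : ℝ) / (n : ℝ) - 1 < (m : ℝ) := by
    have h : (s : ℝ) < (n : ℝ) * ((m : ℝ) + 1) := by exact_mod_cast hsnat
    rw [sub_lt_iff_lt_add, div_lt_iff₀ hn0R]
    nlinarith
  have step1 : ((n : ℝ) / 2) ^ ((s : ℝ) / (n : ℝ) - 1) < ((n : ℝ) / 2) ^ (m : ℕ) := by
    have h := (Real.rpow_lt_rpow_left_iff hn2).mpr hexp
    rwa [Real.rpow_natCast] at h
  have hq1R : (n : ℝ) / 2 ≤ ((q : ℝ) + 1) := by
    have : (n : ℝ) < 2 * (q : ℝ) := by exact_mod_cast hq2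
    linarith
  have step2 : ((n : ℝ) / 2) ^ (m : ℕ) ≤ ((q : ℝ) + 1) ^ (m : ℕ) :=
    pow_le_pow_left₀ (by positivity) hq1R m
  have hfac : (q.factorial : ℝ) * ((q : ℝ) + 1) ^ (m : ℕ) ≤ (n.factorial : ℝ) := by
    have h : q.factorial * (q + 1) ^ m ≤ (q + m).factorial :=
      Nat.factorial_mul_pow_le_factorial
    have hqm : q + m = n := by omega
    rw [hqm] at h
    exact_mod_cast h
  have hqf : (0 : ℝ) < (q.factorial : ℝ) := by positivity
  have step3 : ((q : ℝ) + 1) ^ (m : ℕ) ≤ (n.factorial : ℝ) / (q.factorial : ℝ) := by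
    rw [le_div_iff₀ hqf]
    linarith
  have step4 : (n.factorial : ℝ) / (q.factorial : ℝ)
      ≤ (r : ℝ) * (n.factorial : ℝ) / (q.factorial : ℝ) := by
    have h1 : (n.factorial : ℝ) ≤ (r : ℝ) * (n.factorial : ℝ) :=
      le_mul_of_one_le_left (by positivity) (by exact_mod_cast hr)
    exact (div_le_div_iff_of_pos_right hqf).mpr h1
  calc ((n : ℝ) / 2) ^ ((s : ℝ) / (n : ℝ) - 1)
      < ((n : ℝ) / 2) ^ (m : ℕ) := step1
    _ ≤ ((q : ℝ) + 1) ^ (m : ℕ) := step2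
    _ ≤ (n.factorial : ℝ) / (q.factorial : ℝ) := step3
    _ ≤ (r : ℝ) * (n.factorial : ℝ) / (q.factorial : ℝ) := step4
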